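/- Let R be a symmetric endomorphism of Λ²V all of whose eigenvalues lie in the interval [γ₀, γ₁]. Then for every integer p with 1 ≤ p ≤ q−1 and every p-form ω, p(q−p)γ₀|ω|² ≤ ⟨B_R^{[p]}ω, ω⟩ ≤ p(q−p)γ₁|ω|². -/

import Mathlib

open scoped BigOperators
open scoped symmDiff

namespace Paper

noncomputable section

/-- Coefficients of exterior forms w.r.t. the fixed orthonormal basis `e₁,…,e_q` of `V = ℝ^q`:
a form is identified with its family of coefficients indexed by subsets of `Fin q`. -/
abbrev Ext (q : ℕ) := Finset (Fin q) → ℝ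

variable {q : ℕ}

/-- `(-1)^{#{j ∈ s | j < i}}` -/
def sgn (i : Fin q) (s : Finset (Fin q)) : ℝ := (-1 : ℝ) ^ (s.filter fun j => j < i).card

/-- Exterior multiplication by the basis vector `e_i`. -/
def wB (i : Fin q) (ω : Ext q) : Ext q := fun s =>
  if i ∈ s then sgn i (s.erase i) * ω (s.erase i) else 0

/-- Interior product (contraction) with the basis vector `e_i`. -/
def iB (i : Fin q) (ω : Ext q) : Ext q := fun s =>
  if i ∈ s then 0 else sgn i s * ω (insert i s)

/-- The basis monomial `e_{i₁} ∧ ⋯ ∧ e_{i_p}`, for `s = {i₁ < ⋯ < i_p}`. -/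
def bF (s : Finset (Fin q)) : Ext q := fun t => if t = s then 1 else 0

/-- The basis vector `e_i` of `V = ℝ^q`. -/
def eB (i : Fin q) : Fin q → ℝ := Pi.single i 1

/-- Exterior multiplication by the vector `X ∈ V`. -/
def wV (X : Fin q → ℝ) (ω : Ext q) : Ext q := ∑ i, X i • wB i ω

/-- Interior product with the vector `X ∈ V`. -/
def iV (X : Fin q → ℝ) (ω : Ext q) : Ext q := ∑ i, X i • iB i ω

/-- Clifford multiplication `X · ω = X ∧ ω − X ⌟ ω` of a vector with a form. -/
def clV (X : Fin q → ℝ) (ω : Ext q) : Ext q := wV X ω - iV X ω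

/-- Clifford multiplication `e_{i₁} · e_{i₂} ⋯ e_{i_p} · ω` for `s = {i₁ < ⋯ < i_p}`. -/
def clB (s : Finset (Fin q)) (ω : Ext q) : Ext q :=
  (Finset.sort s (· ≤ ·)).foldr (fun i τ => clV (eB i) τ) ω

/-- Clifford multiplication of two forms. -/
def clM (ω₁ ω₂ : Ext q) : Ext q := ∑ s : Finset (Fin q), ω₁ s • clB s ω₂

/-- The bracket `[ω₁, ω₂] = ω₁ · ω₂ − ω₂ · ω₁`. -/
def brkt (ω₁ ω₂ : Ext q) : Ext q := clM ω₁ ω₂ - clM ω₂ ω₁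

/-- Exterior multiplication by the monomial `e_{i₁} ∧ ⋯ ∧ e_{i_p}`. -/
def wBs (s : Finset (Fin q)) (ω : Ext q) : Ext q :=
  (Finset.sort s (· ≤ ·)).foldr (fun i τ => wB i τ) ω

/-- The wedge product of two forms. -/
def wM (ω₁ ω₂ : Ext q) : Ext q := ∑ s : Finset (Fin q), ω₁ s • wBs s ω₂

/-- The inner product on forms, for which the basis monomials are orthonormal. -/
def ip (ω φ : Ext q) : ℝ := ∑ s : Finset (Fin q), ω s * φ s

/-- `ω` is a form of (pure) degree `p`. -/
def homog (p : ℕ) (ω : Ext q) : Prop := ∀ s : Finset (Fin q), s.card ≠ p → ω s = 0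

/-- The inner product of two vectors of `V = ℝ^q`. -/
def dotP (X Y : Fin q → ℝ) : ℝ := ∑ i, X i * Y i

/-- A vector of `V` regarded as a 1-form. -/
def oneF (X : Fin q → ℝ) : Ext q := ∑ i, X i • bF {i}

/-- The wedge `X ∧ Y` of two vectors. -/
def w2 (X Y : Fin q → ℝ) : Ext q := wV X (oneF Y)

/-- Two-element subsets, indexing the canonical orthonormal basis of `Λ²V`. -/
def twoSets (q : ℕ) : Finset (Finset (Fin q)) := Finset.univ.filter fun s => s.card = 2

-- basic sign lemmas
lemma sgn_mul_self (i : Fin q) (t : Finset (Fin q)) : sgn i t * sgn i t = 1 := by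
  unfold sgn; rw [← pow_add]; exact Even.neg_one_pow ⟨_, rfl⟩

lemma sgn_insert (i j : Fin q) (t : Finset (Fin q)) (hj : j ∉ t) :
    sgn i (insert j t) = (if j < i then -1 else 1) * sgn i t := by
  unfold sgn
  rw [Finset.filter_insert]
  split
  · rw [Finset.card_insert_of_notMem (by simp [hj]), pow_succ]; ring
  · ring

lemma sgn_erase (i j : Fin q) (t : Finset (Fin q)) (hj : j ∈ t) :
    sgn i (t.erase j) = (if j < i then -1 else 1) * sgn i t := by
  have h := sgn_insert i j (t.erase j) (Finset.notMem_erase _ _)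
  rw [Finset.insert_erase hj] at h
  rw [h]; split <;> nlinarith [sgn_mul_self i (t.erase j)]

lemma sgn_erase_self (i : Fin q) (t : Finset (Fin q)) : sgn i (t.erase i) = sgn i t := by
  by_cases h : i ∈ t
  · rw [sgn_erase i i t h, if_neg (lt_irrefl i), one_mul]
  · rw [Finset.erase_eq_of_notMem h]

lemma single_symmDiff (i : Fin q) (t : Finset (Fin q)) :
    ({i} : Finset (Fin q)) ∆ t = if i ∈ t then t.erase i else insert i t := by
  split <;> (ext j; by_cases hj : j = i <;> simp [Finset.mem_symmDiff, hj, *])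

lemma mem_single_symmDiff (i j : Fin q) (t : Finset (Fin q)) :
    i ∈ ({j} : Finset (Fin q)) ∆ t ↔ (if i = j then i ∉ t else i ∈ t) := by
  by_cases h : i = j
  · subst h; simp [Finset.mem_symmDiff]
  · simp [Finset.mem_symmDiff, h]

lemma sgn_single_symmDiff (i j : Fin q) (t : Finset (Fin q)) :
    sgn i (({j} : Finset (Fin q)) ∆ t) = (if j < i then -1 else 1) * sgn i t := by
  rw [single_symmDiff]
  by_cases h : j ∈ t
  · rw [if_pos h, sgn_erase i j t h]
  · rw [if_neg h, sgn_insert i j t h]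

-- eps1
def eps1 (i : Fin q) (t : Finset (Fin q)) : ℝ := (if i ∈ t then -1 else 1) * sgn i t

lemma eps1_mul_self (i : Fin q) (t : Finset (Fin q)) : eps1 i t * eps1 i t = 1 := by
  unfold eps1
  have := sgn_mul_self i t
  split <;> nlinarith [this]

lemma eps1_symmDiff (i j : Fin q) (hij : i ≠ j) (t : Finset (Fin q)) :
    eps1 i (({j} : Finset (Fin q)) ∆ t) = (if j < i then -1 else 1) * eps1 i t := by
  unfold eps1
  rw [sgn_single_symmDiff]
  simp only [mem_single_symmDiff, if_neg hij]
  ring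

lemma eps1_symmDiff_self (i : Fin q) (t : Finset (Fin q)) :
    eps1 i (({i} : Finset (Fin q)) ∆ t) = -eps1 i t := by
  unfold eps1
  rw [sgn_single_symmDiff]
  simp only [mem_single_symmDiff, if_pos rfl, if_neg (lt_irrefl i)]
  by_cases h : i ∈ t <;> simp [h]

-- linear map versions
def wBL (i : Fin q) : Ext q →ₗ[ℝ] Ext q where
  toFun := wB i
  map_add' := by
    intro a b; funext s
    simp only [wB, Pi.add_apply]
    split <;> ring
  map_smul' := by
    intro c a; funext s
    simp only [wB, Pi.smul_apply, smul_eq_mul, RingHom.id_apply]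
    split <;> ring

def iBL (i : Fin q) : Ext q →ₗ[ℝ] Ext q where
  toFun := iB i
  map_add' := by
    intro a b; funext s
    simp only [iB, Pi.add_apply]
    split <;> ring
  map_smul' := by
    intro c a; funext s
    simp only [iB, Pi.smul_apply, smul_eq_mul, RingHom.id_apply]
    split <;> ring

def clVL (X : Fin q → ℝ) : Ext q →ₗ[ℝ] Ext q :=
  (∑ i, X i • wBL i) - (∑ i, X i • iBL i)

lemma clVL_apply (X : Fin q → ℝ) (ω : Ext q) : clVL X ω = clV X ω := by
  simp only [clVL, clV, wV, iV, LinearMap.sub_apply, LinearMap.coe_sum, Finset.sum_apply,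
    LinearMap.smul_apply]
  rfl

lemma clV_smul (X : Fin q → ℝ) (c : ℝ) (ω : Ext q) : clV X (c • ω) = c • clV X ω := by
  rw [← clVL_apply, ← clVL_apply, map_smul]

lemma clV_sum {α : Type*} (X : Fin q → ℝ) (A : Finset α) (f : α → Ext q) :
    clV X (∑ t ∈ A, f t) = ∑ t ∈ A, clV X (f t) := by
  simp only [← clVL_apply, map_sum]

lemma clV_eB (i : Fin q) (ω : Ext q) : clV (eB i) ω = wB i ω - iB i ω := by
  unfold clV wV iV
  congr 1 <;>
  · funext s
    simp only [Finset.sum_apply, Pi.smul_apply, smul_eq_mul, eB, Pi.single_apply, ite_mul,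
      one_mul, zero_mul]
    rw [Finset.sum_ite_eq' Finset.univ i]
    simp

lemma clV_eB_bF (i : Fin q) (t : Finset (Fin q)) :
    clV (eB i) (bF t) = eps1 i t • bF (({i} : Finset (Fin q)) ∆ t) := by
  rw [clV_eB]
  funext u
  simp only [Pi.sub_apply, Pi.smul_apply, smul_eq_mul, wB, iB, bF, single_symmDiff, eps1]
  by_cases h : i ∈ t <;> by_cases hu : i ∈ u <;>
    simp only [h, hu, if_true, if_false, ite_true, ite_false]
  · -- i ∈ t, i ∈ u
    rw [if_neg (fun he : u.erase i = t => (Finset.notMem_erase i u) (he ▸ h)),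
      if_neg (fun he : u = t.erase i => (Finset.notMem_erase i t) (he ▸ hu))]
    ring
  · -- i ∈ t, i ∉ u
    have hiff : insert i u = t ↔ u = t.erase i := by
      constructor
      · intro he; rw [← he, Finset.erase_insert hu]
      · intro he; rw [he, Finset.insert_erase h]
    by_cases hc : u = t.erase i
    · rw [if_pos (hiff.mpr hc), if_pos hc]
      have : sgn i u = sgn i t := by rw [hc, sgn_erase_self]
      rw [this]; ring
    · rw [if_neg (fun he => hc (hiff.mp he)), if_neg hc]
      ring
  · -- i ∉ t, i ∈ u
    have hiff : u.erase i = t ↔ u = insert i t := by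
      constructor
      · intro he; rw [← he, Finset.insert_erase hu]
      · intro he; rw [he, Finset.erase_insert h]
    by_cases hc : u = insert i t
    · rw [if_pos (hiff.mpr hc), if_pos hc]
      have : sgn i (u.erase i) = sgn i t := by
        rw [sgn_erase_self, hc, sgn_insert i i t h, if_neg (lt_irrefl i), one_mul]
      rw [this]; ring
    · rw [if_neg (fun he => hc (hiff.mp he)), if_neg hc]
      ring
  · -- i ∉ t, i ∉ u
    rw [if_neg (fun he : insert i u = t => h (he ▸ Finset.mem_insert_self i u)),
      if_neg (fun he : u = insert i t => hu (he ▸ Finset.mem_insert_self i t))]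
    ring

lemma decomp (ω : Ext q) : ω = ∑ t : Finset (Fin q), ω t • bF t := by
  funext u
  simp only [Finset.sum_apply, Pi.smul_apply, smul_eq_mul, bF, mul_ite, mul_one, mul_zero]
  rw [Finset.sum_ite_eq Finset.univ u]
  simp

lemma symmDiff_single_swap (i j : Fin q) (t : Finset (Fin q)) :
    ({i} : Finset (Fin q)) ∆ (({j} : Finset (Fin q)) ∆ t) =
      ({j} : Finset (Fin q)) ∆ (({i} : Finset (Fin q)) ∆ t) := by
  rw [← symmDiff_assoc, symmDiff_comm ({i} : Finset (Fin q)), symmDiff_assoc]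

lemma clV_anticomm (i j : Fin q) (hij : i ≠ j) (ω : Ext q) :
    clV (eB i) (clV (eB j) ω) = -(clV (eB j) (clV (eB i) ω)) := by
  conv_lhs => rw [decomp ω]
  conv_rhs => rw [decomp ω]
  simp only [clV_sum, clV_smul, clV_eB_bF, smul_smul]
  rw [← Finset.sum_neg_distrib]
  refine Finset.sum_congr rfl fun t _ => ?_
  rw [eps1_symmDiff i j hij, eps1_symmDiff j i hij.symm, symmDiff_single_swap, ← neg_smul]
  congr 1
  rcases hij.lt_or_gt with h | h
  · rw [if_neg (asymm h), if_pos h]; ring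
  · rw [if_pos h, if_neg (asymm h)]; ring

lemma clV_self (i : Fin q) (ω : Ext q) : clV (eB i) (clV (eB i) ω) = -ω := by
  conv_lhs => rw [decomp ω]
  conv_rhs => rw [decomp ω]
  simp only [clV_sum, clV_smul, clV_eB_bF, smul_smul]
  rw [← Finset.sum_neg_distrib]
  refine Finset.sum_congr rfl fun t _ => ?_
  rw [eps1_symmDiff_self, symmDiff_symmDiff_cancel_left, ← neg_smul]
  congr 1
  linear_combination (-(ω t)) * eps1_mul_self i t

-- list level
def foldCl (l : List (Fin q)) (ω : Ext q) : Ext q := l.foldr (fun i τ => clV (eB i) τ) ω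

lemma clB_eq_foldCl (s : Finset (Fin q)) (ω : Ext q) : clB s ω = foldCl (Finset.sort s (· ≤ ·)) ω := rfl

def sdL (l : List (Fin q)) (t : Finset (Fin q)) : Finset (Fin q) :=
  l.foldr (fun i u => ({i} : Finset (Fin q)) ∆ u) t

def epsL : List (Fin q) → Finset (Fin q) → ℝ
  | [], _ => 1
  | i :: l, t => eps1 i (sdL l t) * epsL l t

lemma foldCl_bF (l : List (Fin q)) (t : Finset (Fin q)) :
    foldCl l (bF t) = epsL l t • bF (sdL l t) := by
  induction l with
  | nil => simp [foldCl, epsL, sdL]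
  | cons i l ih =>
    show clV (eB i) (foldCl l (bF t)) = _
    rw [ih, clV_smul, clV_eB_bF, smul_smul, mul_comm]
    rfl

lemma epsL_mul_self (l : List (Fin q)) (t : Finset (Fin q)) : epsL l t * epsL l t = 1 := by
  induction l with
  | nil => simp [epsL]
  | cons i l ih =>
    show (eps1 i (sdL l t) * epsL l t) * (eps1 i (sdL l t) * epsL l t) = 1
    nlinarith [eps1_mul_self i (sdL l t), ih]

lemma sdL_eq (l : List (Fin q)) (h : l.Nodup) (t : Finset (Fin q)) :
    sdL l t = l.toFinset ∆ t := by
  induction l with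
  | nil =>
    exact (by simp only [symmDiff_eq_right, Finset.bot_eq_empty] :
      (∅ : Finset (Fin q)) ∆ t = t).symm
  | cons i l ih =>
    have hi : i ∉ l.toFinset := by simpa using (List.nodup_cons.mp h).1
    show ({i} : Finset (Fin q)) ∆ (sdL l t) = _
    rw [ih (List.nodup_cons.mp h).2, ← symmDiff_assoc, single_symmDiff, if_neg hi]
    simp

lemma clB_bF (s t : Finset (Fin q)) :
    clB s (bF t) = epsL (Finset.sort s (· ≤ ·)) t • bF (s ∆ t) := by
  rw [clB_eq_foldCl, foldCl_bF, sdL_eq _ (Finset.sort_nodup s _), Finset.sort_toFinset]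

lemma epsL_empty_of_sorted (l : List (Fin q)) (h : l.Pairwise (· < ·)) :
    epsL l (∅ : Finset (Fin q)) = 1 := by
  induction l with
  | nil => rfl
  | cons i l ih =>
    have h2 := List.pairwise_cons.mp h
    show eps1 i (sdL l ∅) * epsL l ∅ = 1
    rw [ih h2.2, mul_one, sdL_eq _ h2.2.nodup]
    rw [show l.toFinset ∆ (∅ : Finset (Fin q)) = l.toFinset by
      simp only [symmDiff_eq_left, Finset.bot_eq_empty]]
    have hmem : i ∉ l.toFinset := fun hm => lt_irrefl i (h2.1 i (List.mem_toFinset.mp hm))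
    have hfil : l.toFinset.filter (fun j => j < i) = ∅ := by
      apply Finset.filter_eq_empty_iff.mpr
      intro j hj
      exact not_lt_of_gt (h2.1 j (List.mem_toFinset.mp hj))
    rw [eps1, if_neg hmem, sgn, hfil]
    simp

lemma clB_bF_empty (s : Finset (Fin q)) : clB s (bF ∅) = bF s := by
  rw [clB_bF, epsL_empty_of_sorted _ (Finset.sortedLT_sort s).pairwise, one_smul,
    show s ∆ (∅ : Finset (Fin q)) = s by simp only [symmDiff_eq_left, Finset.bot_eq_empty]]

lemma foldCl_smul (l : List (Fin q)) (c : ℝ) (ω : Ext q) :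
    foldCl l (c • ω) = c • foldCl l ω := by
  induction l with
  | nil => rfl
  | cons i l ih =>
    show clV (eB i) (foldCl l (c • ω)) = _
    rw [ih, clV_smul]
    rfl

lemma foldCl_comm (l : List (Fin q)) (i : Fin q) (ω : Ext q) :
    foldCl l (clV (eB i) ω)
      = ((-1:ℝ)) ^ (l.countP fun k => decide (k ≠ i)) • clV (eB i) (foldCl l ω) := by
  induction l with
  | nil => simp [foldCl]
  | cons k l ih =>
    show clV (eB k) (foldCl l (clV (eB i) ω)) = _
    rw [ih, clV_smul, List.countP_cons]
    by_cases hk : k = i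
    · subst hk
      have hd : (l.countP fun j => decide (j ≠ k)) + (if (fun j => decide (j ≠ k)) k then 1 else 0)
          = l.countP fun j => decide (j ≠ k) := by simp
      rw [hd]
      rfl
    · rw [clV_anticomm k i hk, smul_neg]
      have hd : (l.countP fun j => decide (j ≠ i)) + (if (fun j => decide (j ≠ i)) k then 1 else 0)
          = (l.countP fun j => decide (j ≠ i)) + 1 := by simp [hk]
      rw [hd, pow_succ, mul_neg_one, neg_smul]
      rfl

lemma foldCl_sum {α : Type*} (l : List (Fin q)) (A : Finset α) (f : α → Ext q) :
    foldCl l (∑ t ∈ A, f t) = ∑ t ∈ A, foldCl l (f t) := by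
  induction l with
  | nil => rfl
  | cons i l ih =>
    show clV (eB i) (foldCl l (∑ t ∈ A, f t)) = _
    rw [ih, clV_sum]
    rfl

lemma clB_smul (s : Finset (Fin q)) (c : ℝ) (ω : Ext q) : clB s (c • ω) = c • clB s ω :=
  foldCl_smul _ c ω

lemma clM_bF_left (s : Finset (Fin q)) (ω : Ext q) : clM (bF s) ω = clB s ω := by
  unfold clM
  rw [Finset.sum_eq_single s (fun u _ hu => by simp [bF, hu]) (by simp)]
  simp [bF]

lemma pair_of_card_two (s : Finset (Fin q)) (hs : s.card = 2) :
    ∃ a b : Fin q, a ≠ b ∧ s = {a, b} ∧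
      (∀ ω : Ext q, clB s ω = clV (eB a) (clV (eB b) ω)) := by
  have hl : (Finset.sort s (· ≤ ·)).length = 2 := by rw [Finset.length_sort, hs]
  obtain ⟨a, b, hab⟩ := List.length_eq_two.mp hl
  have hnd : (Finset.sort s (· ≤ ·)).Nodup := Finset.sort_nodup s _
  rw [hab] at hnd
  have hne : a ≠ b := by simpa using (List.nodup_cons.mp hnd).1
  refine ⟨a, b, hne, ?_, fun ω => ?_⟩
  · have := Finset.sort_toFinset s (· ≤ ·)
    rw [hab] at this
    rw [← this]
    ext x; simp
  · rw [clB_eq_foldCl, hab]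
    rfl

lemma countP_sort_ne (t : Finset (Fin q)) (x : Fin q) :
    ((-1:ℝ)) ^ ((Finset.sort t (· ≤ ·)).countP fun k => decide (k ≠ x))
      = (-1:ℝ) ^ t.card * (if x ∈ t then -1 else 1) := by
  have key : ((Finset.sort t (· ≤ ·)).countP fun k => decide (k ≠ x))
      + ((Finset.sort t (· ≤ ·)).countP fun k => decide (k = x)) = t.card := by
    rw [← Finset.length_sort (α := Fin q) (s := t) (· ≤ ·),
      List.length_eq_countP_add_countP (fun k => decide (k ≠ x))]
    congr 1
    apply List.countP_congr
    intro c _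
    by_cases h : c = x <;> simp [h]
  have hcount : ((Finset.sort t (· ≤ ·)).countP fun k => decide (k = x))
      = if x ∈ t then 1 else 0 := by
    have h1 : ((Finset.sort t (· ≤ ·)).countP fun k => decide (k = x))
        = List.count x (Finset.sort t (· ≤ ·)) := by
      rw [List.count]
      apply List.countP_congr
      intro c _
      by_cases h : c = x <;> simp [h]
    rw [h1]
    by_cases h : x ∈ t
    · rw [if_pos h]
      exact List.count_eq_one_of_mem (Finset.sort_nodup t _) ((Finset.mem_sort _).mpr h)
    · rw [if_neg h]
      exact List.count_eq_zero_of_not_mem (fun hm => h ((Finset.mem_sort _).mp hm))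
  by_cases hx : x ∈ t
  · rw [if_pos hx] at hcount ⊢
    rw [← key, hcount, pow_add]
    ring
  · rw [if_neg hx] at hcount ⊢
    rw [← key, hcount, add_zero, mul_one]

lemma clB_bF_swap (s t : Finset (Fin q)) (a b : Fin q)
    (hcl : ∀ ω : Ext q, clB s ω = clV (eB a) (clV (eB b) ω)) :
    clB t (bF s)
      = ((if a ∈ t then (-1:ℝ) else 1) * (if b ∈ t then (-1:ℝ) else 1)) • clB s (bF t) := by
  have h2 : ((-1:ℝ)) ^ t.card * ((-1:ℝ)) ^ t.card = 1 := by
    rw [← pow_add]; exact Even.neg_one_pow ⟨_, rfl⟩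
  calc clB t (bF s) = clB t (clV (eB a) (clV (eB b) (bF ∅))) := by
        rw [← hcl (bF ∅), clB_bF_empty]
    _ = ((-1:ℝ)) ^ ((Finset.sort t (· ≤ ·)).countP fun k => decide (k ≠ a)) •
          clV (eB a) (foldCl (Finset.sort t (· ≤ ·)) (clV (eB b) (bF ∅))) := by
        rw [clB_eq_foldCl t, foldCl_comm]
    _ = (((-1:ℝ)) ^ ((Finset.sort t (· ≤ ·)).countP fun k => decide (k ≠ a)) *
          ((-1:ℝ)) ^ ((Finset.sort t (· ≤ ·)).countP fun k => decide (k ≠ b))) •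
          clV (eB a) (clV (eB b) (foldCl (Finset.sort t (· ≤ ·)) (bF ∅))) := by
        rw [foldCl_comm, clV_smul, smul_smul]
    _ = (((-1:ℝ)) ^ ((Finset.sort t (· ≤ ·)).countP fun k => decide (k ≠ a)) *
          ((-1:ℝ)) ^ ((Finset.sort t (· ≤ ·)).countP fun k => decide (k ≠ b))) •
          clB s (bF t) := by
        rw [← clB_eq_foldCl, clB_bF_empty, ← hcl]
    _ = _ := by
        rw [countP_sort_ne, countP_sort_ne]
        congr 1
        linear_combination ((if a ∈ t then (-1:ℝ) else 1) * (if b ∈ t then (-1:ℝ) else 1)) * h2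

lemma brkt_bF_formula (s : Finset (Fin q)) (a b : Fin q)
    (hcl : ∀ ω : Ext q, clB s ω = clV (eB a) (clV (eB b) ω)) (ω : Ext q) :
    brkt (bF s) ω = ∑ t : Finset (Fin q),
      (ω t * ((1 - (if a ∈ t then (-1:ℝ) else 1) * (if b ∈ t then (-1:ℝ) else 1)) *
        epsL (Finset.sort s (· ≤ ·)) t)) • bF (s ∆ t) := by
  rw [show brkt (bF s) ω = clM (bF s) ω - clM ω (bF s) from rfl, clM_bF_left,
    show clM ω (bF s) = ∑ t : Finset (Fin q), ω t • clB t (bF s) from rfl]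
  have h1 : clB s ω = ∑ t : Finset (Fin q), ω t • clB s (bF t) := by
    conv_lhs => rw [decomp ω]
    rw [clB_eq_foldCl, foldCl_sum]
    exact Finset.sum_congr rfl fun t _ => by rw [← clB_eq_foldCl, clB_smul]
  rw [h1, ← Finset.sum_sub_distrib]
  refine Finset.sum_congr rfl fun t _ => ?_
  rw [clB_bF_swap s t a b hcl, clB_bF s t, smul_smul, smul_smul, smul_smul, ← sub_smul]
  congr 1
  ring

lemma sum_smul_bF_apply (s : Finset (Fin q)) (c : Finset (Fin q) → ℝ) (u : Finset (Fin q)) :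
    (∑ t : Finset (Fin q), c t • bF (s ∆ t)) u = c (s ∆ u) := by
  rw [Finset.sum_apply]
  rw [Finset.sum_eq_single (s ∆ u)]
  · simp [bF, symmDiff_symmDiff_cancel_left]
  · intro t _ ht
    have hne : u ≠ s ∆ t := fun h => ht (by rw [h, symmDiff_symmDiff_cancel_left])
    simp [bF, hne]
  · simp

def sdEquiv (s : Finset (Fin q)) : Finset (Fin q) ≃ Finset (Fin q) where
  toFun u := s ∆ u
  invFun u := s ∆ u
  left_inv u := symmDiff_symmDiff_cancel_left s u
  right_inv u := symmDiff_symmDiff_cancel_left s u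

lemma pair_inter_card (a b : Fin q) (hab : a ≠ b) (t : Finset (Fin q)) :
    (({a, b} : Finset (Fin q)) ∩ t).card
      = (if a ∈ t then 1 else 0) + (if b ∈ t then 1 else 0) := by
  by_cases ha : a ∈ t <;> by_cases hb : b ∈ t
  · have h : ({a, b} : Finset (Fin q)) ∩ t = {a, b} := by
      ext x; simp only [Finset.mem_inter, Finset.mem_insert, Finset.mem_singleton]
      constructor
      · tauto
      · rintro (rfl | rfl) <;> simp [ha, hb]
    rw [h, Finset.card_pair hab]; simp [ha, hb]
  · have h : ({a, b} : Finset (Fin q)) ∩ t = {a} := by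
      ext x; simp only [Finset.mem_inter, Finset.mem_insert, Finset.mem_singleton]
      constructor
      · rintro ⟨rfl | rfl, hx⟩
        · rfl
        · exact absurd hx hb
      · rintro rfl; exact ⟨Or.inl rfl, ha⟩
    rw [h, Finset.card_singleton]; simp [ha, hb]
  · have h : ({a, b} : Finset (Fin q)) ∩ t = {b} := by
      ext x; simp only [Finset.mem_inter, Finset.mem_insert, Finset.mem_singleton]
      constructor
      · rintro ⟨rfl | rfl, hx⟩
        · exact absurd hx ha
        · rfl
      · rintro rfl; exact ⟨Or.inr rfl, hb⟩
    rw [h, Finset.card_singleton]; simp [ha, hb]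
  · have h : ({a, b} : Finset (Fin q)) ∩ t = ∅ := by
      ext x; simp only [Finset.mem_inter, Finset.mem_insert, Finset.mem_singleton]
      constructor
      · rintro ⟨rfl | rfl, hx⟩
        · exact absurd hx ha
        · exact absurd hx hb
      · simp
    rw [h, Finset.card_empty]; simp [ha, hb]

lemma ip_brkt_self (s : Finset (Fin q)) (hs : s.card = 2) (ω : Ext q) :
    ip (brkt (bF s) ω) (brkt (bF s) ω)
      = ∑ t : Finset (Fin q), (if (s ∩ t).card = 1 then (4:ℝ) else 0) * ω t ^ 2 := by
  obtain ⟨a, b, hab, hsab, hcl⟩ := pair_of_card_two s hs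
  subst hsab
  set c : Finset (Fin q) → ℝ := fun t =>
    ω t * ((1 - (if a ∈ t then (-1:ℝ) else 1) * (if b ∈ t then (-1:ℝ) else 1)) *
      epsL (Finset.sort ({a, b} : Finset (Fin q)) (· ≤ ·)) t) with hc
  have hform := brkt_bF_formula ({a, b} : Finset (Fin q)) a b hcl ω
  calc ip (brkt (bF ({a, b} : Finset (Fin q))) ω) (brkt (bF ({a, b} : Finset (Fin q))) ω)
      = ∑ u : Finset (Fin q), c (({a, b} : Finset (Fin q)) ∆ u)
          * c (({a, b} : Finset (Fin q)) ∆ u) := by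
        unfold ip
        refine Finset.sum_congr rfl fun u _ => ?_
        rw [hform, sum_smul_bF_apply]
    _ = ∑ t : Finset (Fin q), c t * c t := by
        exact Fintype.sum_equiv (sdEquiv ({a, b} : Finset (Fin q))) _ _ (fun u => rfl)
    _ = _ := by
        refine Finset.sum_congr rfl fun t _ => ?_
        have hE := epsL_mul_self (Finset.sort ({a, b} : Finset (Fin q)) (· ≤ ·)) t
        rw [hc, pair_inter_card a b hab t]
        by_cases ha : a ∈ t <;> by_cases hb : b ∈ t <;>
          simp only [ha, hb, if_true, if_false, ite_true, ite_false] <;> norm_num <;>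
          linear_combination (4 * ω t ^ 2) * hE

lemma count_pairs (t : Finset (Fin q)) :
    ((twoSets q).filter fun s => (s ∩ t).card = 1).card = t.card * tᶜ.card := by
  rw [← Finset.card_product]
  symm
  apply Finset.card_bij (fun p _ => ({p.1, p.2} : Finset (Fin q)))
  · rintro ⟨x, y⟩ hp
    simp only [Finset.mem_product, Finset.mem_compl] at hp
    have hxy : x ≠ y := fun h => hp.2 (h ▸ hp.1)
    simp only [Finset.mem_filter, twoSets, Finset.mem_univ, true_and]
    constructor
    · exact Finset.card_pair hxy
    · rw [pair_inter_card x y hxy t, if_pos hp.1, if_neg hp.2]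
  · rintro ⟨x, y⟩ hp ⟨x', y'⟩ hp' h
    simp only [Finset.mem_product, Finset.mem_compl] at hp hp'
    have hx' : x' ∈ ({x, y} : Finset (Fin q)) := h ▸ Finset.mem_insert_self x' {y'}
    have hy' : y' ∈ ({x, y} : Finset (Fin q)) := h ▸ (by simp)
    simp only [Finset.mem_insert, Finset.mem_singleton] at hx' hy'
    have hxx : x' = x := by
      rcases hx' with h1 | h1
      · exact h1
      · exact absurd (h1 ▸ hp'.1) hp.2
    have hyy : y' = y := by
      rcases hy' with h1 | h1
      · exact absurd (h1 ▸ hp.1) hp'.2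
      · exact h1
    simp [hxx, hyy]
  · intro s hsf
    simp only [Finset.mem_filter, twoSets, Finset.mem_univ, true_and] at hsf
    obtain ⟨u, v, huv, rfl⟩ := Finset.card_eq_two.mp hsf.1
    have hcard := hsf.2
    rw [pair_inter_card u v huv t] at hcard
    by_cases hu : u ∈ t <;> by_cases hv : v ∈ t <;>
      simp only [hu, hv, if_true, if_false, ite_true, ite_false] at hcard <;> try omega
    · exact ⟨(u, v), by simp [Finset.mem_product, hu, hv], rfl⟩
    · refine ⟨(v, u), by simp [Finset.mem_product, hu, hv], ?_⟩
      ext x; simp only [Finset.mem_insert, Finset.mem_singleton]; tauto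

lemma sum_ip_brkt (p : ℕ) (hp : p ≤ q) (ω : Ext q) (hω : homog p ω) :
    ∑ s ∈ twoSets q, ip (brkt (bF s) ω) (brkt (bF s) ω)
      = 4 * ((p : ℝ) * ((q : ℝ) - (p : ℝ))) * ip ω ω := by
  have h1 : ∀ s ∈ twoSets q, ip (brkt (bF s) ω) (brkt (bF s) ω)
      = ∑ t : Finset (Fin q), (if (s ∩ t).card = 1 then (4:ℝ) else 0) * ω t ^ 2 := by
    intro s hsm
    exact ip_brkt_self s (by simpa [twoSets] using hsm) ω
  rw [Finset.sum_congr rfl h1, Finset.sum_comm]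
  unfold ip
  rw [Finset.mul_sum]
  refine Finset.sum_congr rfl fun t _ => ?_
  rw [← Finset.sum_mul, Finset.sum_ite, Finset.sum_const, Finset.sum_const_zero, add_zero,
    count_pairs t]
  by_cases h0 : ω t = 0
  · rw [h0]; ring
  · have hcard : t.card = p := by
      by_contra hne
      exact h0 (hω t hne)
    have hcompl : (tᶜ : Finset (Fin q)).card = q - p := by
      rw [Finset.card_compl, hcard]
      simp
    rw [hcard, hcompl]
    have : ((q : ℝ) - (p : ℝ)) = ((q - p : ℕ) : ℝ) := by
      rw [Nat.cast_sub hp]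
    rw [this]
    ring

abbrev TwoSub (q : ℕ) := {s : Finset (Fin q) // s.card = 2}

lemma ip_comm (ω φ : Ext q) : ip ω φ = ip φ ω := by
  unfold ip
  exact Finset.sum_congr rfl fun s _ => mul_comm _ _

lemma ip_bF_right (φ : Ext q) (u : Finset (Fin q)) : ip φ (bF u) = φ u := by
  unfold ip bF
  rw [Finset.sum_eq_single u (fun v _ hv => by simp [hv]) (by simp)]
  simp

lemma homog_bF_two (i : TwoSub q) : homog 2 (bF (i : Finset (Fin q))) := by
  intro u hu
  have : u ≠ (i : Finset (Fin q)) := fun h => hu (by rw [h]; exact i.2)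
  simp [bF, this]

section spectral

variable (γ₀ γ₁ : ℝ) (R : Ext q →ₗ[ℝ] Ext q)
variable (hR2 : ∀ η : Ext q, homog 2 η → homog 2 (R η))
variable (hsym : ∀ a b : Ext q, homog 2 a → homog 2 b → ip (R a) b = ip a (R b))
variable (hev : ∀ (μ : ℝ) (η : Ext q), homog 2 η → η ≠ 0 → R η = μ • η → γ₀ ≤ μ ∧ μ ≤ γ₁)

def Amat (R : Ext q →ₗ[ℝ] Ext q) : Matrix (TwoSub q) (TwoSub q) ℝ :=
  Matrix.of fun i j => ip (R (bF (i : Finset (Fin q)))) (bF (j : Finset (Fin q)))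

include hsym in
lemma Amat_symm (i j : TwoSub q) : Amat R j i = Amat R i j := by
  unfold Amat
  simp only [Matrix.of_apply]
  rw [hsym _ _ (homog_bF_two j) (homog_bF_two i), ip_comm]

include hsym in
lemma Amat_herm : (Amat R).IsHermitian := by
  apply Matrix.IsHermitian.ext
  intro i j
  simp only [star_trivial]
  exact Amat_symm R hsym i j

include hR2 hsym hev in
lemma eigen_bound (i : TwoSub q) :
    γ₀ ≤ (Amat_herm R hsym).eigenvalues i ∧ (Amat_herm R hsym).eigenvalues i ≤ γ₁ := by
  set hA := Amat_herm R hsym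
  set v : TwoSub q → ℝ := fun j => hA.eigenvectorBasis i j with hv
  set μ := hA.eigenvalues i with hμ
  have hmv : ∀ k : TwoSub q, (∑ j : TwoSub q, Amat R k j * v j) = μ * v k := by
    intro k
    have h := hA.mulVec_eigenvectorBasis i
    have h2 := congrFun h k
    simpa [Matrix.mulVec, dotProduct] using h2
  set η : Ext q := ∑ j : TwoSub q, v j • bF (j : Finset (Fin q)) with hη
  have hhom : homog 2 η := by
    intro u hu
    rw [hη, Finset.sum_apply]
    refine Finset.sum_eq_zero fun j _ => ?_
    have : u ≠ (j : Finset (Fin q)) := fun h => hu (by rw [h]; exact j.2)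
    simp [bF, this]
  have hcoef : ∀ j : TwoSub q, η (j : Finset (Fin q)) = v j := by
    intro j
    rw [hη, Finset.sum_apply]
    rw [Finset.sum_eq_single j (fun k _ hk => ?_) (by simp)]
    · simp [bF]
    · have : (j : Finset (Fin q)) ≠ (k : Finset (Fin q)) := fun h => hk (Subtype.ext h.symm)
      simp [bF, this]
  have hne : η ≠ 0 := by
    intro h0
    have hv0 : hA.eigenvectorBasis i = 0 := by
      ext j
      have := hcoef j
      rw [h0] at this
      exact (this.symm : v j = _)
    have := hA.eigenvectorBasis.orthonormal.1 i
    rw [hv0] at this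
    simp at this
  have heig : R η = μ • η := by
    funext u
    by_cases hu : u.card = 2
    · have hRη : R η = ∑ j : TwoSub q, v j • R (bF (j : Finset (Fin q))) := by
        rw [hη, map_sum]
        exact Finset.sum_congr rfl fun j _ => by rw [map_smul]
      have h1 : (R η) u = ∑ j : TwoSub q, v j * (R (bF (j : Finset (Fin q)))) u := by
        rw [hRη, Finset.sum_apply]
        rfl
      have h2 : ∀ j : TwoSub q, (R (bF (j : Finset (Fin q)))) u = Amat R j ⟨u, hu⟩ := by
        intro j
        rw [← ip_bF_right (R (bF (j : Finset (Fin q)))) u]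
        rfl
      rw [h1]
      have h3 : ∑ j : TwoSub q, v j * (R (bF (j : Finset (Fin q)))) u
          = ∑ j : TwoSub q, Amat R (⟨u, hu⟩ : TwoSub q) j * v j := by
        refine Finset.sum_congr rfl fun j _ => ?_
        rw [h2 j, Amat_symm R hsym, mul_comm]
      rw [h3, hmv ⟨u, hu⟩]
      have : η u = v ⟨u, hu⟩ := hcoef ⟨u, hu⟩
      rw [show (μ • η) u = μ * η u from rfl, this]
    · rw [hR2 η hhom u hu, show (μ • η) u = μ * η u from rfl, hhom u hu, mul_zero]
  exact hev μ η hhom hne heig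

include hR2 hsym hev in
lemma quad_bound (x : TwoSub q → ℝ) :
    γ₀ * (∑ i, x i * x i)
        ≤ (∑ i : TwoSub q, ∑ j : TwoSub q, ip (R (bF ↑i)) (bF ↑j) * (x i * x j))
    ∧ (∑ i : TwoSub q, ∑ j : TwoSub q, ip (R (bF ↑i)) (bF ↑j) * (x i * x j))
        ≤ γ₁ * (∑ i, x i * x i) := by
  set hA := Amat_herm R hsym
  set b := hA.eigenvectorBasis with hb
  set T : EuclideanSpace ℝ (TwoSub q) →ₗ[ℝ] EuclideanSpace ℝ (TwoSub q) :=
    Matrix.toEuclideanLin (Amat R) with hT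
  set y : EuclideanSpace ℝ (TwoSub q) := (WithLp.equiv 2 _).symm x with hy
  set c : TwoSub q → ℝ := fun i => (inner ℝ (b i) y : ℝ) with hc
  have hQ : (∑ i : TwoSub q, ∑ j : TwoSub q, ip (R (bF ↑i)) (bF ↑j) * (x i * x j))
      = (inner ℝ y (T y) : ℝ) := by
    rw [PiLp.inner_apply]
    refine Finset.sum_congr rfl fun i _ => ?_
    simp only [RCLike.inner_apply, starRingEnd_apply, star_trivial, hT,
      Matrix.toEuclideanLin_apply, PiLp.toLp_apply]
    rw [show ((Amat R).mulVec y.ofLp) i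
        = ∑ j : TwoSub q, Amat R i j * y.ofLp j from rfl, Finset.sum_mul]
    refine Finset.sum_congr rfl fun j _ => ?_
    have hyi : ∀ k, y.ofLp k = x k := fun k => rfl
    have hyk : y i = x i := rfl
    rw [hyi j, hyk]
    rw [show Amat R i j = ip (R (bF ↑i)) (bF ↑j) from rfl]
    ring
  have hTb : ∀ i : TwoSub q, T (b i) = hA.eigenvalues i • b i := by
    intro i
    have h := hA.mulVec_eigenvectorBasis i
    ext k
    have h3 := congrFun h k
    simp only [hT, Matrix.toEuclideanLin_apply, PiLp.toLp_apply]
    exact h3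
  have hyrepr : y = ∑ i : TwoSub q, c i • b i := (b.sum_repr' y).symm
  have hQ2 : (inner ℝ y (T y) : ℝ) = ∑ i : TwoSub q, hA.eigenvalues i * (c i * c i) := by
    conv_lhs => rw [hyrepr]
    rw [map_sum, inner_sum]
    refine Finset.sum_congr rfl fun i _ => ?_
    rw [map_smul, hTb i, smul_smul, real_inner_smul_right, real_inner_comm, ← hyrepr]
    show c i * hA.eigenvalues i * c i = _
    ring
  have hpars : ∑ i : TwoSub q, c i * c i = ∑ k, x k * x k := by
    have h := b.sum_inner_mul_inner y y
    have h1 : ∀ i : TwoSub q, (inner ℝ y (b i) : ℝ) = c i := fun i => real_inner_comm _ _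
    have h2 : (inner ℝ y y : ℝ) = ∑ k, x k * x k := by
      rw [PiLp.inner_apply]
      refine Finset.sum_congr rfl fun k _ => ?_
      simp only [RCLike.inner_apply, starRingEnd_apply, star_trivial]
      rfl
    rw [← h2, ← h]
    exact Finset.sum_congr rfl fun i _ => by rw [h1 i, hc]
  rw [hQ, hQ2, ← hpars, Finset.mul_sum, Finset.mul_sum]
  constructor
  · refine Finset.sum_le_sum fun i _ => ?_
    have := (eigen_bound γ₀ γ₁ R hR2 hsym hev i).1
    nlinarith [mul_self_nonneg (c i)]
  · refine Finset.sum_le_sum fun i _ => ?_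
    have := (eigen_bound γ₀ γ₁ R hR2 hsym hev i).2
    nlinarith [mul_self_nonneg (c i)]

end spectral

/-- The Bochner operator quadratic form `⟨B_R^{[p]} ω, φ⟩ =
(1/4) Σ_{r,s} ⟨R ψ_r, ψ_s⟩ ⟨[ψ_r,ω],[ψ_s,φ]⟩`, computed in the canonical
orthonormal basis `{e_i ∧ e_j}_{i<j}` of `Λ²V`. -/
def Bform (R : Ext q →ₗ[ℝ] Ext q) (ω φ : Ext q) : ℝ :=
  (1 / 4 : ℝ) * ∑ s ∈ twoSets q, ∑ t ∈ twoSets q,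
    ip (R (bF s)) (bF t) * ip (brkt (bF s) ω) (brkt (bF t) φ)

theorem statement_4' {p : ℕ} (hq : 1 ≤ q) (γ₀ γ₁ : ℝ) (R : Ext q →ₗ[ℝ] Ext q)
    (hR2 : ∀ η : Ext q, homog 2 η → homog 2 (R η))
    (hsym : ∀ a b : Ext q, homog 2 a → homog 2 b → ip (R a) b = ip a (R b))
    (hev : ∀ (μ : ℝ) (η : Ext q), homog 2 η → η ≠ 0 → R η = μ • η → γ₀ ≤ μ ∧ μ ≤ γ₁)
    (hp1 : 1 ≤ p) (hpq : p ≤ q - 1)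
    (ω : Ext q) (hω : homog p ω)
    (Bform : ℝ)
    (hB : Bform = (1 / 4 : ℝ) * ∑ s ∈ twoSets q, ∑ t ∈ twoSets q,
      ip (R (bF s)) (bF t) * ip (brkt (bF s) ω) (brkt (bF t) ω)) :
    (p : ℝ) * ((q : ℝ) - (p : ℝ)) * γ₀ * ip ω ω ≤ Bform ∧
      Bform ≤ (p : ℝ) * ((q : ℝ) - (p : ℝ)) * γ₁ * ip ω ω := by
  have hpq' : p ≤ q := le_trans hpq (Nat.sub_le q 1)
  have hmem : ∀ s : Finset (Fin q), s ∈ twoSets q ↔ s.card = 2 := by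
    intro s; simp [twoSets]
  set u : TwoSub q → Ext q := fun i => brkt (bF (i : Finset (Fin q))) ω with hu
  have hdouble : (∑ s ∈ twoSets q, ∑ t ∈ twoSets q,
        ip (R (bF s)) (bF t) * ip (brkt (bF s) ω) (brkt (bF t) ω))
      = ∑ k : Finset (Fin q), ∑ i : TwoSub q, ∑ j : TwoSub q,
          ip (R (bF ↑i)) (bF ↑j) * (u i k * u j k) := by
    rw [Finset.sum_subtype (twoSets q) hmem]
    rw [Finset.sum_congr rfl fun i _ => Finset.sum_subtype (twoSets q) hmem _]
    have h1 : ∀ i j : TwoSub q, ip (R (bF ↑i)) (bF ↑j) * ip (u i) (u j)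
        = ∑ k : Finset (Fin q), ip (R (bF ↑i)) (bF ↑j) * (u i k * u j k) := by
      intro i j
      rw [show ip (u i) (u j) = ∑ k, u i k * u j k from rfl, Finset.mul_sum]
    rw [Finset.sum_congr rfl fun i _ => Finset.sum_congr rfl fun j _ => h1 i j]
    rw [Finset.sum_congr rfl fun i _ => Finset.sum_comm]
    exact Finset.sum_comm
  have hsum : (∑ k : Finset (Fin q), ∑ i : TwoSub q, u i k * u i k)
      = 4 * ((p : ℝ) * ((q : ℝ) - (p : ℝ))) * ip ω ω := by
    rw [Finset.sum_comm]
    rw [show (∑ i : TwoSub q, ∑ k : Finset (Fin q), u i k * u i k)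
        = ∑ i : TwoSub q, ip (u i) (u i) from rfl]
    rw [← Finset.sum_subtype (twoSets q) hmem
      (fun s => ip (brkt (bF s) ω) (brkt (bF s) ω))]
    exact sum_ip_brkt p hpq' ω hω
  have hbound := fun k : Finset (Fin q) =>
    quad_bound γ₀ γ₁ R hR2 hsym hev (fun i => u i k)
  have hlow : γ₀ * (∑ k : Finset (Fin q), ∑ i : TwoSub q, u i k * u i k)
      ≤ ∑ k : Finset (Fin q), ∑ i : TwoSub q, ∑ j : TwoSub q,
          ip (R (bF ↑i)) (bF ↑j) * (u i k * u j k) := by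
    rw [Finset.mul_sum]
    exact Finset.sum_le_sum fun k _ => (hbound k).1
  have hupp : (∑ k : Finset (Fin q), ∑ i : TwoSub q, ∑ j : TwoSub q,
          ip (R (bF ↑i)) (bF ↑j) * (u i k * u j k))
      ≤ γ₁ * (∑ k : Finset (Fin q), ∑ i : TwoSub q, u i k * u i k) := by
    rw [Finset.mul_sum]
    exact Finset.sum_le_sum fun k _ => (hbound k).2
  rw [hsum] at hlow hupp
  rw [hB, hdouble]
  constructor
  · calc (p : ℝ) * ((q : ℝ) - (p : ℝ)) * γ₀ * ip ω ω
        = (1/4 : ℝ) * (γ₀ * (4 * ((p : ℝ) * ((q : ℝ) - (p : ℝ))) * ip ω ω)) := by ring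
      _ ≤ _ := by linarith
  · calc (1/4 : ℝ) * (∑ k : Finset (Fin q), ∑ i : TwoSub q, ∑ j : TwoSub q,
          ip (R (bF ↑i)) (bF ↑j) * (u i k * u j k))
        ≤ (1/4 : ℝ) * (γ₁ * (4 * ((p : ℝ) * ((q : ℝ) - (p : ℝ))) * ip ω ω)) := by linarith
      _ = (p : ℝ) * ((q : ℝ) - (p : ℝ)) * γ₁ * ip ω ω := by ring


/-- Inequality (3.6) of the paper. If `R` is a symmetric endomorphism of
`Λ²V` all of whose eigenvalues lie in `[γ₀, γ₁]`, then for every `1 ≤ p ≤ q−1` and every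
`p`-form `ω`, `p(q−p)γ₀|ω|² ≤ ⟨B_R^{[p]}ω, ω⟩ ≤ p(q−p)γ₁|ω|²`. -/
theorem statement_4 {q p : ℕ} (hq : 1 ≤ q) (γ₀ γ₁ : ℝ) (R : Ext q →ₗ[ℝ] Ext q)
    (hR2 : ∀ η : Ext q, homog 2 η → homog 2 (R η))
    (hsym : ∀ a b : Ext q, homog 2 a → homog 2 b → ip (R a) b = ip a (R b))
    (hev : ∀ (μ : ℝ) (η : Ext q), homog 2 η → η ≠ 0 → R η = μ • η → γ₀ ≤ μ ∧ μ ≤ γ₁)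
    (hp1 : 1 ≤ p) (hpq : p ≤ q - 1)
    (ω : Ext q) (hω : homog p ω) :
    (p : ℝ) * ((q : ℝ) - (p : ℝ)) * γ₀ * ip ω ω ≤ Bform R ω ω ∧
      Bform R ω ω ≤ (p : ℝ) * ((q : ℝ) - (p : ℝ)) * γ₁ * ip ω ω := by
  exact statement_4' hq γ₀ γ₁ R hR2 hsym hev hp1 hpq ω hω (Bform R ω ω) rfl

end
end Paper
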